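/- arXiv:1909.08826 — 9 statements merged into one kernel-verified Lean document; each statement's English description precedes it below -/
import Mathlib

section
/- In the category Preord of preordered sets and monotone maps, for every preordered set (A, ρ) the quotient map π_A : (A, ρ) → (A/∼_ρ, π(ρ)) onto its antisymmetrization is a regular epimorphism, and moreover every pullback in Preord of π_A along an arbitrary monotone map is again a regular epimorphism. (Thus the full subcategory PartOrd of partially ordered sets is a (regular epi)-reflective subcategory of Preord, with units the maps π_A.) -/
universe u

open CategoryTheory

/-- For every preordered set `A`, the antisymmetrization quotient map
`π_A : A → A/∼` is a regular epimorphism in `Preord`, and every pullback of `π_A`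
along an arbitrary monotone map is again a regular epimorphism. -/
theorem stmt2 (A : Preord.{u}) :
    ∀ π : A ⟶ Preord.of (Antisymmetrization A (· ≤ ·)),
      (⇑(show A →o Antisymmetrization A (· ≤ ·) from π.hom) = toAntisymmetrization (· ≤ ·)) →
      Nonempty (RegularEpi π) ∧
        ∀ (C P : Preord.{u}) (g : C ⟶ Preord.of (Antisymmetrization A (· ≤ ·)))
          (p₁ : P ⟶ C) (p₂ : P ⟶ A),
          IsPullback p₁ p₂ g π → Nonempty (RegularEpi p₁) := by
  intro π hπ
  -- the section of π
  let s : Preord.of (Antisymmetrization A (· ≤ ·)) ⟶ A :=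
    Preord.ofHom ⟨ofAntisymmetrization (· ≤ ·), fun a b h =>
      (ofAntisymmetrization_le_ofAntisymmetrization_iff).2 h⟩
  have hsec : s ≫ π = 𝟙 _ := by
    ext x
    change (show A →o Antisymmetrization A (· ≤ ·) from π.hom)
      ((show Preord.of (Antisymmetrization A (· ≤ ·)) →o A from s.hom) x) = x
    rw [hπ]
    exact toAntisymmetrization_ofAntisymmetrization _ _
  haveI : IsSplitEpi π := ⟨⟨⟨s, hsec⟩⟩⟩
  constructor
  · exact ⟨RegularEpi.ofSplitEpi π⟩
  · intro C P g p₁ p₂ hpb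
    have hcomm : 𝟙 C ≫ g = (g ≫ s) ≫ π := by
      simp [Category.assoc, hsec]
    haveI : IsSplitEpi p₁ :=
      ⟨⟨⟨hpb.lift (𝟙 C) (g ≫ s) hcomm, hpb.lift_fst _ _ _⟩⟩⟩
    exact ⟨RegularEpi.ofSplitEpi p₁⟩
end

section
/- The reflector F : Preord → PartOrd (antisymmetrization) has stable units. Concretely: let (X, ρ) and (Z, σ) be preordered sets, let π_X : X → X/∼_ρ be the antisymmetrization quotient map, and let φ : Z → X/∼_ρ be any monotone map into the antisymmetrization of X. Form the pullback P = {(x, z) ∈ X × Z | π_X(x) = φ(z)}, equipped with the componentwise preorder. Then the monotone map between antisymmetrizations P/∼ → Z/∼_σ induced by the second projection (x, z) ↦ z is an order isomorphism; equivalently, F sends this pullback square to a pullback square in PartOrd. -/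
universe u

section Aux

variable {X Z : Type u} [Preorder X] [Preorder Z]
  (φ : Z →o Antisymmetrization X (· ≤ ·))

private def auxF :
    Antisymmetrization {p : X × Z // @toAntisymmetrization X (· ≤ ·) _ p.1 = φ p.2} (· ≤ ·) →
      Antisymmetrization Z (· ≤ ·) :=
  Quotient.lift (fun p => toAntisymmetrization (α := Z) (· ≤ ·) p.1.2)
    (fun _ _ h => Quotient.sound ⟨h.1.2, h.2.2⟩)

private noncomputable def auxg (z : Z) :
    {p : X × Z // @toAntisymmetrization X (· ≤ ·) _ p.1 = φ p.2} :=
  ⟨(ofAntisymmetrization (· ≤ ·) (φ z), z), toAntisymmetrization_ofAntisymmetrization _ _⟩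

private noncomputable def auxG : Antisymmetrization Z (· ≤ ·) →
    Antisymmetrization {p : X × Z // @toAntisymmetrization X (· ≤ ·) _ p.1 = φ p.2} (· ≤ ·) :=
  Quotient.lift (fun z : Z => toAntisymmetrization (· ≤ ·) (auxg φ z)) (by
    intro z z' h
    apply Quotient.sound
    have h1 : φ z = φ z' := le_antisymm (φ.mono h.1) (φ.mono h.2)
    exact ⟨⟨by simp [auxg, h1], h.1⟩, ⟨by simp [auxg, h1], h.2⟩⟩)

private theorem aux_key (p : {p : X × Z // @toAntisymmetrization X (· ≤ ·) _ p.1 = φ p.2}) :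
    AntisymmRel (· ≤ ·) (auxg φ p.1.2) p := by
  have hx : toAntisymmetrization (α := X) (· ≤ ·) (ofAntisymmetrization (· ≤ ·) (φ p.1.2))
      = toAntisymmetrization (α := X) (· ≤ ·) p.1.1 := by
    rw [toAntisymmetrization_ofAntisymmetrization, p.2]
  have hx' : AntisymmRel (· ≤ ·) (ofAntisymmetrization (· ≤ ·) (φ p.1.2)) p.1.1 :=
    Quotient.exact hx
  exact ⟨⟨hx'.1, le_refl _⟩, ⟨hx'.2, le_refl _⟩⟩

end Aux

/-- The antisymmetrization reflector `Preord → PartOrd` has stable units: for preordered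
sets `X`, `Z` and a monotone map `φ : Z → X/∼`, the monotone map between antisymmetrizations
induced by the second projection of the pullback
`P = {(x, z) | π_X x = φ z}` (with componentwise preorder) is an order isomorphism. -/
theorem stmt3 {X Z : Type u} [Preorder X] [Preorder Z]
    (φ : Z →o Antisymmetrization X (· ≤ ·)) :
    ∃ e : Antisymmetrization {p : X × Z // @toAntisymmetrization X (· ≤ ·) _ p.1 = φ p.2}
          (· ≤ ·) ≃o Antisymmetrization Z (· ≤ ·),
      ∀ p : {p : X × Z // @toAntisymmetrization X (· ≤ ·) _ p.1 = φ p.2},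
        e (toAntisymmetrization (· ≤ ·) p) = @toAntisymmetrization Z (· ≤ ·) _ p.1.2 := by
  classical
  refine ⟨⟨⟨auxF φ, auxG φ, ?_, ?_⟩, ?_⟩, fun p => rfl⟩
  · intro q
    induction q using Antisymmetrization.ind with
    | _ p => exact Quotient.sound (aux_key φ p)
  · intro q
    induction q using Antisymmetrization.ind with
    | _ z => rfl
  · intro q q'
    induction q using Antisymmetrization.ind with
    | _ p =>
      induction q' using Antisymmetrization.ind with
      | _ p' =>
        constructor
        · intro h
          have h2 : p.1.2 ≤ p'.1.2 := h
          have h1 : p.1.1 ≤ p'.1.1 := by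
            rw [← toAntisymmetrization_le_toAntisymmetrization_iff, p.2, p'.2]
            exact φ.mono h2
          exact (⟨h1, h2⟩ : p.1 ≤ p'.1)
        · intro h
          exact (h : p.1 ≤ p'.1).2
end

section
/- Let f : (A, ρ) → (B, σ) be a monotone map of preordered sets. The commutative naturality square in Preord with top edge f, vertical edges the antisymmetrization quotient maps π_A : A → A/∼_ρ and π_B : B → B/∼_σ, and bottom edge the induced map F(f) : A/∼_ρ → B/∼_σ, is a pullback square in the category Preord if and only if the pair of maps (f, f̂) : (A, ∼_ρ) → (B, ∼_σ) is a discrete fibration of equivalence relations, i.e., for every a ∈ A and every b ∈ B with b ∼_σ f(a) there exists a unique a' ∈ A such that a' ∼_ρ a and f(a') = b. -/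
universe u

open CategoryTheory Limits

lemma toAnti_eq_iff {A : Type u} [Preorder A] {a b : A} :
    toAntisymmetrization (α := A) (· ≤ ·) a = toAntisymmetrization (α := A) (· ≤ ·) b ↔
      AntisymmRel (· ≤ ·) a b :=
  Quotient.eq''

/-- The naturality square of the antisymmetrization unit at a monotone map
`f : (A, ρ) → (B, σ)` is a pullback square in `Preord` if and only if
`(f, f̂) : (A, ∼_ρ) → (B, ∼_σ)` is a discrete fibration of equivalence relations. -/
theorem stmt5 {A B : Type u} [Preorder A] [Preorder B] (f : A →o B) :
    IsPullback (C := Preord.{u})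
      (show Preord.of A ⟶ Preord.of (Antisymmetrization A (· ≤ ·)) from
        Preord.ofHom ⟨toAntisymmetrization (· ≤ ·), toAntisymmetrization_mono⟩)
      (show Preord.of A ⟶ Preord.of B from Preord.ofHom f)
      (show Preord.of (Antisymmetrization A (· ≤ ·)) ⟶
          Preord.of (Antisymmetrization B (· ≤ ·)) from Preord.ofHom f.antisymmetrization)
      (show Preord.of B ⟶ Preord.of (Antisymmetrization B (· ≤ ·)) from
        Preord.ofHom ⟨toAntisymmetrization (· ≤ ·), toAntisymmetrization_mono⟩) ↔
    ∀ (a : A) (b : B), AntisymmRel (· ≤ ·) b (f a) →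
      ∃! a' : A, AntisymmRel (· ≤ ·) a' a ∧ f a' = b := by
  set πA : Preord.of A ⟶ Preord.of (Antisymmetrization A (· ≤ ·)) :=
    Preord.ofHom ⟨toAntisymmetrization (· ≤ ·), toAntisymmetrization_mono⟩ with hπA
  set πB : Preord.of B ⟶ Preord.of (Antisymmetrization B (· ≤ ·)) :=
    Preord.ofHom ⟨toAntisymmetrization (· ≤ ·), toAntisymmetrization_mono⟩ with hπB
  set fh : Preord.of (Antisymmetrization A (· ≤ ·)) ⟶ Preord.of (Antisymmetrization B (· ≤ ·)) :=
    Preord.ofHom (f.antisymmetrization : Antisymmetrization A (· ≤ ·) →o Antisymmetrization B (· ≤ ·)) with hfh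
  set fPre : Preord.of A ⟶ Preord.of B := Preord.ofHom (f : A →o B) with hfPre
  have comm : πA ≫ fh = fPre ≫ πB := by
    apply Preord.hom_ext; apply OrderHom.ext
    funext a
    exact f.antisymmetrization_apply_mk a
  constructor
  · intro hpb a b hb
    -- test with a point
    let pt : Preord := Preord.of PUnit.{u+1}
    let c : pt ⟶ Preord.of (Antisymmetrization A (· ≤ ·)) :=
      Preord.ofHom ⟨fun _ => toAntisymmetrization (α := A) (· ≤ ·) a, monotone_const⟩
    let d : pt ⟶ Preord.of B := Preord.ofHom ⟨fun _ => b, monotone_const⟩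
    have hcd : c ≫ fh = d ≫ πB := by
      apply Preord.hom_ext; apply OrderHom.ext; funext x
      show f.antisymmetrization (toAntisymmetrization (α := A) (· ≤ ·) a)
        = toAntisymmetrization (α := B) (· ≤ ·) b
      rw [f.antisymmetrization_apply_mk, toAnti_eq_iff]
      exact hb.symm
    obtain ⟨l, hl1, hl2⟩ := PullbackCone.IsLimit.lift' hpb.isLimit c d hcd
    refine ⟨(show pt ⟶ Preord.of A from l).hom PUnit.unit, ⟨?_, ?_⟩, ?_⟩
    · rw [← toAnti_eq_iff]
      exact congrFun (congrArg (fun (g : pt ⟶ Preord.of (Antisymmetrization A (· ≤ ·))) =>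
        g.hom.toFun) hl1) PUnit.unit
    · exact congrFun (congrArg (fun (g : pt ⟶ Preord.of B) =>
        g.hom.toFun) hl2) PUnit.unit
    · intro a' ⟨ha'1, ha'2⟩
      let m : pt ⟶ Preord.of A := Preord.ofHom ⟨fun _ => a', monotone_const⟩
      have e1 : m ≫ πA = c := by
        apply Preord.hom_ext; apply OrderHom.ext; funext x
        exact toAnti_eq_iff.mpr ha'1
      have e2 : m ≫ fPre = d := by
        apply Preord.hom_ext; apply OrderHom.ext; funext x
        exact ha'2
      have hm : m = l := by
        apply PullbackCone.IsLimit.hom_ext hpb.isLimit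
        · show m ≫ πA = l ≫ πA
          rw [e1]; exact hl1.symm
        · show m ≫ fPre = l ≫ fPre
          rw [e2]; exact hl2.symm
      exact congrFun (congrArg (fun (g : pt ⟶ Preord.of A) =>
        g.hom.toFun) hm) PUnit.unit
  · intro H
    refine ⟨⟨comm⟩, ⟨?_⟩⟩
    apply PullbackCone.IsLimit.mk comm
      (lift := fun s => ?_) (fac_left := fun s => ?_) (fac_right := fun s => ?_)
      (uniq := fun s m hm1 hm2 => ?_)
    all_goals
      have key : ∀ x : ↥s.pt,
          ∃! a' : A,
            AntisymmRel (· ≤ ·) a'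
              (ofAntisymmetrization (α := A) (· ≤ ·)
                (s.fst.hom x)) ∧
            f a' = s.snd.hom x := by
        intro x
        apply H
        rw [← toAnti_eq_iff]
        have hcond : f.antisymmetrization
              (s.fst.hom x)
            = toAntisymmetrization (α := B) (· ≤ ·) (s.snd.hom x) :=
          congrFun (congrArg (fun (g : s.pt ⟶ Preord.of (Antisymmetrization B (· ≤ ·))) =>
            g.hom.toFun) s.condition) x
        rw [← hcond]
        conv_lhs => rw [← toAntisymmetrization_ofAntisymmetrization (· ≤ ·)
          (s.fst.hom x)]
        rw [f.antisymmetrization_apply_mk]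
    · -- lift
      refine Preord.ofHom ⟨fun x => (key x).choose, ?_⟩
      intro x y hxy
      rw [← toAntisymmetrization_le_toAntisymmetrization_iff]
      have hx := toAnti_eq_iff.mpr (key x).choose_spec.1.1
      have hy := toAnti_eq_iff.mpr (key y).choose_spec.1.1
      rw [hx, hy, toAntisymmetrization_ofAntisymmetrization,
        toAntisymmetrization_ofAntisymmetrization]
      exact s.fst.hom.monotone hxy
    · -- fac_left
      apply Preord.hom_ext; apply OrderHom.ext; funext x
      show toAntisymmetrization (α := A) (· ≤ ·) (key x).choose
          = s.fst.hom x
      rw [toAnti_eq_iff.mpr (key x).choose_spec.1.1,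
        toAntisymmetrization_ofAntisymmetrization]
    · -- fac_right
      apply Preord.hom_ext; apply OrderHom.ext; funext x
      exact (key x).choose_spec.1.2
    · -- uniq
      apply Preord.hom_ext; apply OrderHom.ext; funext x
      apply (key x).choose_spec.2
      constructor
      · rw [← toAnti_eq_iff, toAntisymmetrization_ofAntisymmetrization]
        exact congrFun (congrArg (fun (g : s.pt ⟶ Preord.of (Antisymmetrization A (· ≤ ·))) =>
          g.hom.toFun) hm1) x
      · exact congrFun (congrArg (fun (g : s.pt ⟶ Preord.of B) =>
          g.hom.toFun) hm2) x
end

section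
/- For every preordered set (B, σ) there exist a partially ordered set (A, ≤) and a surjective monotone map p : A → B with the following lifting property: for all b₁, b₂, b₃ ∈ B with b₁ σ b₂ and b₂ σ b₃, there exist e₁, e₂, e₃ ∈ A such that e₁ ≤ e₂, e₂ ≤ e₃, and p(eᵢ) = bᵢ for i = 1, 2, 3. (This lifting property characterizes effective descent morphisms in the category of preordered sets; hence every preordered set is covered by a partially ordered set via an effective descent morphism.) -/
universe u

/-- Every preordered set `(B, σ)` admits a surjective monotone map `p : (A, ≤) → (B, σ)`
from a partially ordered set satisfying the lifting property characterizing effective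
descent morphisms in `Preord`: any chain `b₁ σ b₂ σ b₃` lifts to a chain `e₁ ≤ e₂ ≤ e₃`
with `p eᵢ = bᵢ`. -/
theorem stmt7 {B : Type u} (σ : B → B → Prop)
    (hσrefl : Reflexive σ) (hσtrans : Transitive σ) :
    ∃ (A : Type u) (le : A → A → Prop),
      Reflexive le ∧ Transitive le ∧ AntiSymmetric le ∧
      ∃ p : A → B, Function.Surjective p ∧
        (∀ a a' : A, le a a' → σ (p a) (p a')) ∧
        ∀ b₁ b₂ b₃ : B, σ b₁ b₂ → σ b₂ b₃ →
          ∃ e₁ e₂ e₃ : A, le e₁ e₂ ∧ le e₂ e₃ ∧ p e₁ = b₁ ∧ p e₂ = b₂ ∧ p e₃ = b₃ := by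
  refine ⟨B × ℕ, fun a a' => a = a' ∨ (σ a.1 a'.1 ∧ a.2 < a'.2), fun a => Or.inl rfl,
    ?_, ?_, Prod.fst, fun b => ⟨(b, 0), rfl⟩, ?_, ?_⟩
  · rintro a b c (rfl | ⟨h1, h2⟩) hbc
    · exact hbc
    · rcases hbc with rfl | ⟨h3, h4⟩
      · exact Or.inr ⟨h1, h2⟩
      · exact Or.inr ⟨hσtrans h1 h3, lt_trans h2 h4⟩
  · rintro a b (rfl | ⟨h1, h2⟩) hba
    · rfl
    · rcases hba with rfl | ⟨h3, h4⟩
      · rfl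
      · exact absurd h4 (not_lt.mpr h2.le)
  · rintro a a' (rfl | ⟨h1, _⟩)
    · exact hσrefl _
    · exact h1
  · intro b₁ b₂ b₃ h12 h23
    exact ⟨(b₁, 0), (b₂, 1), (b₃, 2), Or.inr ⟨h12, by omega⟩, Or.inr ⟨h23, by omega⟩,
      rfl, rfl, rfl⟩
end

section
/- Let f : (A, ρ) → (B, σ) be a monotone map of preordered sets. Then the following are equivalent: (i) for every b ∈ B, the fibre f⁻¹(b) with the induced preorder is a partially ordered set; (ii) there exist a partially ordered set (E, ≤) and a surjective monotone map p : E → B satisfying the lifting property (for all b₁ σ b₂ σ b₃ in B there exist e₁ ≤ e₂ ≤ e₃ in E with p(eᵢ) = bᵢ), such that the pullback E ×_B A = {(e, a) ∈ E × A | p(e) = f(a)}, equipped with the componentwise preorder, is a partially ordered set. (Condition (i) characterizes the coverings with respect to the reflection of preordered sets onto partially ordered sets.) -/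
universe u

/-- A monotone map `f : (A, ρ) → (B, σ)` of preordered sets has all fibres partially
ordered if and only if there is a partially ordered set `(E, ≤)` and a surjective monotone
map `p : E → B` with the effective-descent lifting property, such that the pullback
`E ×_B A` with the componentwise preorder is a partially ordered set. -/
theorem stmt9 {A B : Type u} (ρ : A → A → Prop) (σ : B → B → Prop)
    (hρrefl : Reflexive ρ) (hρtrans : Transitive ρ)
    (hσrefl : Reflexive σ) (hσtrans : Transitive σ)
    (f : A → B) (hf : ∀ a a' : A, ρ a a' → σ (f a) (f a')) :
    (∀ b : B, ∀ a a' : {x : A // f x = b}, ρ a.1 a'.1 → ρ a'.1 a.1 → a = a') ↔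
      ∃ (E : Type u) (le : E → E → Prop),
        Reflexive le ∧ Transitive le ∧ AntiSymmetric le ∧
        ∃ p : E → B, Function.Surjective p ∧
          (∀ e e' : E, le e e' → σ (p e) (p e')) ∧
          (∀ b₁ b₂ b₃ : B, σ b₁ b₂ → σ b₂ b₃ →
            ∃ e₁ e₂ e₃ : E, le e₁ e₂ ∧ le e₂ e₃ ∧ p e₁ = b₁ ∧ p e₂ = b₂ ∧ p e₃ = b₃) ∧
          ∀ q q' : {x : E × A // p x.1 = f x.2},
            (le q.1.1 q'.1.1 ∧ ρ q.1.2 q'.1.2) → (le q'.1.1 q.1.1 ∧ ρ q'.1.2 q.1.2) →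
              q = q' := by
  constructor
  · intro hfib
    -- E = (3-chains in B) × Fin 3, ordered within each chain
    refine ⟨({c : B × B × B // σ c.1 c.2.1 ∧ σ c.2.1 c.2.2} × Fin 3),
      (fun x y => x.1 = y.1 ∧ x.2 ≤ y.2), ?_, ?_, ?_, ?_⟩
    · intro x; exact ⟨rfl, le_refl _⟩
    · intro x y z h1 h2; exact ⟨h1.1.trans h2.1, h1.2.trans h2.2⟩
    · intro x y h1 h2
      have : x.2 = y.2 := le_antisymm h1.2 h2.2
      exact Prod.ext h1.1 this
    · refine ⟨fun x => if x.2 = 0 then x.1.1.1 else if x.2 = 1 then x.1.1.2.1 else x.1.1.2.2,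
        ?_, ?_, ?_, ?_⟩
      · intro b
        exact ⟨⟨⟨(b, b, b), hσrefl b, hσrefl b⟩, 0⟩, rfl⟩
      · rintro ⟨c, i⟩ ⟨c', j⟩ ⟨hc, hij⟩
        subst hc
        fin_cases i <;> fin_cases j <;> simp_all <;>
          first
          | exact hσrefl _
          | exact c.2.1
          | exact c.2.2
          | exact hσtrans c.2.1 c.2.2
          | omega
      · intro b₁ b₂ b₃ h12 h23
        refine ⟨⟨⟨(b₁, b₂, b₃), h12, h23⟩, 0⟩, ⟨⟨(b₁, b₂, b₃), h12, h23⟩, 1⟩,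
          ⟨⟨(b₁, b₂, b₃), h12, h23⟩, 2⟩, ⟨rfl, by norm_num [Fin.le_def]⟩, ⟨rfl, by norm_num [Fin.le_def]⟩, rfl, rfl, rfl⟩
      · rintro ⟨⟨e, a⟩, hq⟩ ⟨⟨e', a'⟩, hq'⟩ ⟨⟨hc, hij⟩, ha⟩ ⟨⟨hc', hij'⟩, ha'⟩
        have he : e = e' := Prod.ext hc (le_antisymm hij hij')
        subst he
        have hb : f a = f a' := hq ▸ hq' ▸ rfl
        have := hfib (f a) ⟨a, rfl⟩ ⟨a', hb.symm⟩ ha ha'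
        simp only [Subtype.mk.injEq] at this
        subst this
        rfl
  · rintro ⟨E, le, hrefl, _, _, p, hsurj, _, _, hpb⟩
    intro b a a' h1 h2
    obtain ⟨e, he⟩ := hsurj b
    have hq : p e = f a.1 := by rw [he, a.2]
    have hq' : p e = f a'.1 := by rw [he, a'.2]
    have := hpb ⟨(e, a.1), hq⟩ ⟨(e, a'.1), hq'⟩ ⟨hrefl e, h1⟩ ⟨hrefl e, h2⟩
    simp only [Subtype.mk.injEq, Prod.mk.injEq] at this
    exact Subtype.ext this.2
end

section
/- Let f : (A, ρ) → (B, σ) be a monotone map of preordered sets. Let ≈ be the equivalence relation on A defined by a ≈ a' iff f(a) = f(a'), a ρ a' and a' ρ a, let Q = A/≈ with the image preorder e(ρ) (i.e., [a] e(ρ) [a'] iff a ρ a'), let e : A → Q be the quotient map, and let m : Q → B be the unique map with m ∘ e = f. Then: (1) e is a surjective, fully faithful monotone map; (2) m is monotone and every fibre m⁻¹(b) of m, with the preorder induced from e(ρ), is a partially ordered set. (This gives the monotone-light factorization f = m ∘ e of an arbitrary morphism of preordered sets.) -/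
/-- Canonical monotone-light factorization `f = m ∘ e` of a monotone map of preordered
sets: `e : A → A/≈` (where `a ≈ a'` iff `f a = f a'`, `a ρ a'` and `a' ρ a`) is a
surjective fully faithful monotone map, and the induced map `m : A/≈ → B` is monotone
with all fibres partially ordered. -/
theorem stmt12 {A B : Type*} (ρ : A → A → Prop) (σ : B → B → Prop)
    (hρrefl : Reflexive ρ) (hρtrans : Transitive ρ)
    (hσrefl : Reflexive σ) (hσtrans : Transitive σ)
    (f : A → B) (hf : ∀ a a' : A, ρ a a' → σ (f a) (f a'))
    (s : Setoid A) (hs : ∀ a a' : A, s.r a a' ↔ (f a = f a' ∧ ρ a a' ∧ ρ a' a))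
    (eρ : Quotient s → Quotient s → Prop)
    (heρ : ∀ a a' : A, eρ (Quotient.mk s a) (Quotient.mk s a') ↔ ρ a a')
    (m : Quotient s → B) (hm : ∀ a : A, m (Quotient.mk s a) = f a) :
    Function.Surjective (Quotient.mk s) ∧
      (∀ a a' : A, ρ a a' ↔ eρ (Quotient.mk s a) (Quotient.mk s a')) ∧
      (∀ q q' : Quotient s, eρ q q' → σ (m q) (m q')) ∧
      ∀ b : B, ∀ q q' : {x : Quotient s // m x = b},
        eρ q.1 q'.1 → eρ q'.1 q.1 → q = q' := by
  refine ⟨fun q => Quotient.exists_rep q, fun a a' => (heρ a a').symm, ?_, ?_⟩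
  · intro q q' h
    induction q using Quotient.ind with
    | _ a =>
    induction q' using Quotient.ind with
    | _ a' =>
    rw [hm, hm]
    exact hf a a' ((heρ a a').mp h)
  · rintro b ⟨q, hq⟩ ⟨q', hq'⟩ h1 h2
    induction q using Quotient.ind with
    | _ a =>
    induction q' using Quotient.ind with
    | _ a' =>
    simp only [Subtype.mk_eq_mk]
    exact Quotient.sound ((hs a a').mpr
      ⟨by rw [← hm, ← hm, hq, hq'], (heρ a a').mp h1, (heρ a' a).mp h2⟩)
end

section
/- Surjective fully faithful monotone maps are orthogonal to monotone maps with partially ordered fibres: given a commutative square m ∘ u = v ∘ e of monotone maps of preordered sets, where e : (A, ρ) → (B, σ) is surjective and fully faithful, and m : (C, τ) → (D, ψ) is such that every fibre m⁻¹(d) with the induced preorder is a partially ordered set, there exists a unique monotone map α : (B, σ) → (C, τ) with α ∘ e = u and m ∘ α = v. (Together with the canonical factorization, this shows that the classes (surjective fully faithful maps, maps with partially ordered fibres) form the monotone-light factorization system on Preord induced by the reflection onto PartOrd.) -/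
/-- Surjective fully faithful monotone maps are orthogonal to monotone maps with partially
ordered fibres: in any commutative square `m ∘ u = v ∘ e` with `e` surjective fully
faithful and every fibre of `m` partially ordered, there is a unique monotone diagonal
`α` with `α ∘ e = u` and `m ∘ α = v`. -/
theorem stmt13 {A B C D : Type*}
    (ρ : A → A → Prop) (σ : B → B → Prop) (τ : C → C → Prop) (ψ : D → D → Prop)
    (hρrefl : Reflexive ρ) (hρtrans : Transitive ρ)
    (hσrefl : Reflexive σ) (hσtrans : Transitive σ)
    (hτrefl : Reflexive τ) (hτtrans : Transitive τ)
    (hψrefl : Reflexive ψ) (hψtrans : Transitive ψ)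
    (e : A → B) (hesurj : Function.Surjective e)
    (heff : ∀ a a' : A, ρ a a' ↔ σ (e a) (e a'))
    (m : C → D) (hm : ∀ c c' : C, τ c c' → ψ (m c) (m c'))
    (hmfib : ∀ c c' : C, m c = m c' → τ c c' → τ c' c → c = c')
    (u : A → C) (hu : ∀ a a' : A, ρ a a' → τ (u a) (u a'))
    (v : B → D) (hv : ∀ b b' : B, σ b b' → ψ (v b) (v b'))
    (hcomm : ∀ a : A, m (u a) = v (e a)) :
    ∃! α : B → C, (∀ b b' : B, σ b b' → τ (α b) (α b')) ∧
      (∀ a : A, α (e a) = u a) ∧ ∀ b : B, m (α b) = v b := by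
  classical
  have key : ∀ a a' : A, e a = e a' → u a = u a' := by
    intro a a' h
    have h1 : ρ a a' := (heff a a').mpr (h ▸ hσrefl (e a))
    have h2 : ρ a' a := (heff a' a).mpr (h ▸ hσrefl (e a))
    exact hmfib _ _ (by rw [hcomm, hcomm, h]) (hu _ _ h1) (hu _ _ h2)
  refine ⟨fun b => u (hesurj b).choose, ⟨?_, ?_, ?_⟩, ?_⟩
  · intro b b' h
    refine hu _ _ ((heff _ _).mpr ?_)
    rw [(hesurj b).choose_spec, (hesurj b').choose_spec]; exact h
  · intro a; exact key _ _ (hesurj (e a)).choose_spec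
  · intro b; rw [hcomm, (hesurj b).choose_spec]
  · rintro α ⟨hmono, hcomp, hfib⟩
    funext b
    conv_lhs => rw [← (hesurj b).choose_spec]
    exact hcomp _
end

section
/- Let X be an Alexandrov-discrete topological space, Y a topological space, and f : X → Y a continuous map. Then the following are equivalent: (i) for all x, y ∈ X with f(x) = f(y), one has y ∈ closure({x}) (i.e., the kernel pair of f is contained in the specialization preorder of X); (ii) for every b ∈ Y, the fibre f⁻¹(b), with the subspace topology, has the trivial (indiscrete) topology, i.e., its only open subsets are ∅ and f⁻¹(b) itself. -/
/-- For a continuous map `f : X → Y` from an Alexandrov-discrete space, the kernel pair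
of `f` is contained in the specialization preorder of `X` if and only if every fibre of
`f`, with the subspace topology, has the trivial (indiscrete) topology. -/
theorem stmt16 {X Y : Type*} [TopologicalSpace X] [TopologicalSpace Y]
    [AlexandrovDiscrete X] (f : X → Y) (hf : Continuous f) :
    (∀ x y : X, f x = f y → y ∈ closure ({x} : Set X)) ↔
      ∀ b : Y, ∀ V : Set (f ⁻¹' {b}), IsOpen V → V = ∅ ∨ V = Set.univ := by
  constructor
  · intro h b V hV
    rcases isOpen_induced_iff.mp hV with ⟨U, hU, rfl⟩
    rcases Set.eq_empty_or_nonempty (Subtype.val ⁻¹' U : Set (f ⁻¹' {b})) with he | hne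
    · exact Or.inl he
    · right
      obtain ⟨⟨x, hx⟩, hxU⟩ := hne
      ext ⟨y, hy⟩
      simp only [Set.mem_univ, iff_true, Set.mem_preimage]
      have hfy : f y = f x := by
        simp only [Set.mem_preimage, Set.mem_singleton_iff] at hx hy
        rw [hx, hy]
      have hcl := h y x hfy
      rw [mem_closure_iff] at hcl
      obtain ⟨z, hzU, hz⟩ := hcl U hU hxU
      rw [Set.mem_singleton_iff] at hz
      rwa [hz] at hzU
  · intro h x y hxy
    rw [mem_closure_iff]
    intro U hU hyU
    have hx : x ∈ f ⁻¹' {f x} := rfl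
    have hy : y ∈ f ⁻¹' {f x} := by simp [← hxy]
    have := h (f x) (Subtype.val ⁻¹' U) (hU.preimage continuous_subtype_val)
    rcases this with he | huniv
    · exact absurd (Set.eq_empty_iff_forall_notMem.mp he ⟨y, hy⟩ hyU) (by simp)
    · have : (⟨x, hx⟩ : f ⁻¹' {f x}) ∈ Subtype.val ⁻¹' U := huniv ▸ Set.mem_univ _
      exact ⟨x, this, rfl⟩
end

section
/- Let X be a topological space with a partition topology (every open subset of X is closed), let Y be a T₀ topological space, and let f : X → Y be continuous. Then f identifies specialization-related points: for all x, y ∈ X with y ∈ closure({x}), one has f(x) = f(y). (This is the torsion–torsion-free condition of the pretorsion theory whose torsion part consists of partition-topology spaces and whose torsion-free part consists of T₀ spaces: every continuous map from a partition-topology space to a T₀ space factors through a discrete space, locally on specialization classes.) -/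
/-- Every continuous map from a space with a partition topology to a T₀ space identifies
specialization-related points. -/
theorem stmt18 {X Y : Type*} [TopologicalSpace X] [TopologicalSpace Y] [T0Space Y]
    (hX : ∀ U : Set X, IsOpen U → IsClosed U)
    (f : X → Y) (hf : Continuous f) :
    ∀ x y : X, y ∈ closure ({x} : Set X) → f x = f y := by
  intro x y hy
  have h1 : x ⤳ y := specializes_iff_mem_closure.mpr hy
  have h2 : y ⤳ x := by
    rw [specializes_iff_forall_open]
    intro U hU hxU
    by_contra hyU
    have : y ∈ Uᶜ := hyU
    have := (specializes_iff_forall_open.mp h1) Uᶜ ((hX U hU).isOpen_compl) hyU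
    exact this hxU
  exact ((h1.map hf).antisymm (h2.map hf)).eq
end
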